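/- Let G be a simple digraph on finite vertex set V with degree sequence d, and suppose there is a three-element set C = {u,v,w} ⊆ V with arcs (u,v),(v,w),(w,u) and no arcs (v,u),(w,v),(u,w), such that every vertex x ∈ V \ C lies in one of the four classes C^0, C^-, C^+, C^± (defined by: C^0 — no arcs between x and C; C^- — all arcs from x to C and none from C to x; C^+ — all arcs from C to x and none from x to C; C^± — all arcs in both directions between x and C), and such that the arcs among V \ C satisfy: every ordered pair from C^± ∪ C^- to C^± ∪ C^+ (with distinct endpoints) is an arc, no ordered pair from C^+ ∪ C^0 to C^- ∪ C^0 (with distinct endpoints) is an arc, and arcs within C^- and within C^+ and between the remaining class pairs marked * are unrestricted. Then every realization G' ∈ R(d) of the degree sequence d of G induces a directed 3-cycle on C. -/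

import Mathlib

/-- A simple directed graph on vertex set `V`: an irreflexive (Boolean) arc
relation, i.e. no self-loops and at most one arc in each direction. -/
structure SDigraph (V : Type) where
  Adj : V → V → Bool
  irrefl : ∀ v, Adj v v = false

/-- Out-degree of a vertex. -/
def SDigraph.outDeg {V : Type} [Fintype V] [DecidableEq V]
    (G : SDigraph V) (v : V) : ℕ :=
  (Finset.univ.filter fun x => G.Adj v x = true).card

/-- In-degree of a vertex. -/
def SDigraph.inDeg {V : Type} [Fintype V] [DecidableEq V]
    (G : SDigraph V) (v : V) : ℕ :=
  (Finset.univ.filter fun x => G.Adj x v = true).card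

/-- `G` realizes the integer-pair (degree) sequence `d`: vertex `v` has
out-degree `(d v).1` and in-degree `(d v).2`. -/
def Realizes {V : Type} [Fintype V] [DecidableEq V]
    (G : SDigraph V) (d : V → ℕ × ℕ) : Prop :=
  ∀ v, G.outDeg v = (d v).1 ∧ G.inDeg v = (d v).2

/-- `H` is obtained from `G` by a single 2-switch: arcs `(v₁,v₂)`, `(v₃,v₄)`
are replaced by `(v₁,v₄)`, `(v₃,v₂)`, allowed only when the four vertices
are distinct, the former two are arcs and the latter two are not. -/
def TwoSwitch {V : Type} [DecidableEq V] (G H : SDigraph V) : Prop :=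
  ∃ v₁ v₂ v₃ v₄ : V,
    v₁ ≠ v₂ ∧ v₁ ≠ v₃ ∧ v₁ ≠ v₄ ∧ v₂ ≠ v₃ ∧ v₂ ≠ v₄ ∧ v₃ ≠ v₄ ∧
    G.Adj v₁ v₂ = true ∧ G.Adj v₃ v₄ = true ∧
    G.Adj v₁ v₄ = false ∧ G.Adj v₃ v₂ = false ∧
    ∀ x y, H.Adj x y =
      if (x = v₁ ∧ y = v₂) ∨ (x = v₃ ∧ y = v₄) then false
      else if (x = v₁ ∧ y = v₄) ∨ (x = v₃ ∧ y = v₂) then true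
      else G.Adj x y

/-- `G` and `H` differ by a single 2-switch (in either direction). -/
def TwoSwitchStep {V : Type} [DecidableEq V] (G H : SDigraph V) : Prop :=
  TwoSwitch G H ∨ TwoSwitch H G

/-- `H` is reachable from `G` by a finite sequence of 2-switches. -/
def Reach2 {V : Type} [DecidableEq V] (G H : SDigraph V) : Prop :=
  Relation.ReflTransGen TwoSwitchStep G H

/-- `H` is obtained from `G` by reorienting an induced directed 3-cycle:
there are distinct `u v w` with arcs `(u,v),(v,w),(w,u)` and no arcs
`(v,u),(w,v),(u,w)`, and `H` replaces these three arcs by the reversed ones. -/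
def CycleReorient {V : Type} [DecidableEq V] (G H : SDigraph V) : Prop :=
  ∃ u v w : V, u ≠ v ∧ v ≠ w ∧ u ≠ w ∧
    G.Adj u v = true ∧ G.Adj v w = true ∧ G.Adj w u = true ∧
    G.Adj v u = false ∧ G.Adj w v = false ∧ G.Adj u w = false ∧
    ∀ x y, H.Adj x y =
      if (x = u ∨ x = v ∨ x = w) ∧ (y = u ∨ y = v ∨ y = w) then G.Adj y x
      else G.Adj x y

/-- The three vertices `u, v, w` induce a directed 3-cycle in `G`: the induced
subgraph on them consists of exactly the three arcs of one cyclic orientation. -/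
def InducesC3 {V : Type} (G : SDigraph V) (u v w : V) : Prop :=
  (G.Adj u v = true ∧ G.Adj v w = true ∧ G.Adj w u = true ∧
    G.Adj v u = false ∧ G.Adj w v = false ∧ G.Adj u w = false) ∨
  (G.Adj v u = true ∧ G.Adj w v = true ∧ G.Adj u w = true ∧
    G.Adj u v = false ∧ G.Adj v w = false ∧ G.Adj w u = false)

/-- The digraph obtained from `G` by reversing all arcs among `{u, v, w}`
(and leaving all other arcs unchanged).  When `{u,v,w}` induces a directed
3-cycle in `G`, this is exactly the reorientation of that 3-cycle. -/
def flip3 {V : Type} [DecidableEq V] (G : SDigraph V) (u v w : V) : SDigraph V where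
  Adj x y :=
    if (x = u ∨ x = v ∨ x = w) ∧ (y = u ∨ y = v ∨ y = w) then G.Adj y x
    else G.Adj x y
  irrefl := by
    intro x
    simp only [ite_self]
    exact G.irrefl x

/-- `x` is in class `C⁰` relative to `C = {u,v,w}`: no arcs between `x` and
`C` in either direction. -/
def InC0 {V : Type} (G : SDigraph V) (u v w x : V) : Prop :=
  G.Adj x u = false ∧ G.Adj x v = false ∧ G.Adj x w = false ∧
  G.Adj u x = false ∧ G.Adj v x = false ∧ G.Adj w x = false

/-- `x` is in class `C⁻`: all three arcs from `x` to `C` are present and no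
arcs from `C` to `x`. -/
def InCminus {V : Type} (G : SDigraph V) (u v w x : V) : Prop :=
  G.Adj x u = true ∧ G.Adj x v = true ∧ G.Adj x w = true ∧
  G.Adj u x = false ∧ G.Adj v x = false ∧ G.Adj w x = false

/-- `x` is in class `C⁺`: all three arcs from `C` to `x` are present and no
arcs from `x` to `C`. -/
def InCplus {V : Type} (G : SDigraph V) (u v w x : V) : Prop :=
  G.Adj x u = false ∧ G.Adj x v = false ∧ G.Adj x w = false ∧
  G.Adj u x = true ∧ G.Adj v x = true ∧ G.Adj w x = true

/-- `x` is in class `C^±`: all six arcs between `x` and `C` are present. -/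
def InCpm {V : Type} (G : SDigraph V) (u v w x : V) : Prop :=
  G.Adj x u = true ∧ G.Adj x v = true ∧ G.Adj x w = true ∧
  G.Adj u x = true ∧ G.Adj v x = true ∧ G.Adj w x = true


section Aux11
set_option linter.unusedSectionVars false
variable {V : Type} [Fintype V] [DecidableEq V]

lemma card_filter_split (s : Finset V) (p : V → Prop) [DecidablePred p] :
    (Finset.univ.filter p).card = (s.filter p).card + (sᶜ.filter p).card := by
  rw [← Finset.card_union_of_disjoint (Finset.disjoint_filter_filter disjoint_compl_right),
    ← Finset.filter_union, Finset.union_compl]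

lemma sum_filter_swap (s t : Finset V) (r : V → V → Bool) :
    ∑ x ∈ s, (t.filter (fun y => r x y = true)).card
      = ∑ y ∈ t, (s.filter (fun x => r x y = true)).card := by
  simp only [Finset.card_filter]
  exact Finset.sum_comm

lemma filter_true_add_false (s : Finset V) (f : V → Bool) :
    (s.filter (fun y => f y = true)).card + (s.filter (fun y => f y = false)).card = s.card := by
  have h : Finset.filter (fun y => f y = false) s
      = Finset.filter (fun a => ¬ f a = true) s := by
    apply Finset.filter_congr; intro y _; simp [Bool.not_eq_true]
  rw [h, Finset.card_filter_add_card_filter_not]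

lemma count_identity (H : SDigraph V) (A B : Finset V) :
    (∑ y ∈ B, H.inDeg y) + (∑ x ∈ Aᶜ, ((Bᶜ).filter (fun y => H.Adj x y = true)).card)
    = (∑ x ∈ A, (B.filter (fun y => H.Adj x y = true)).card) + (∑ x ∈ Aᶜ, H.outDeg x) := by
  have hin : ∑ y ∈ B, H.inDeg y
      = (∑ y ∈ B, (A.filter (fun x => H.Adj x y = true)).card)
        + (∑ y ∈ B, (Aᶜ.filter (fun x => H.Adj x y = true)).card) := by
    rw [← Finset.sum_add_distrib]
    exact Finset.sum_congr rfl fun y _ => card_filter_split A _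
  have hout : ∑ x ∈ Aᶜ, H.outDeg x
      = (∑ x ∈ Aᶜ, (B.filter (fun y => H.Adj x y = true)).card)
        + (∑ x ∈ Aᶜ, ((Bᶜ).filter (fun y => H.Adj x y = true)).card) := by
    rw [← Finset.sum_add_distrib]
    exact Finset.sum_congr rfl fun x _ => card_filter_split B _
  rw [hin, hout, ← sum_filter_swap A B (fun x y => H.Adj x y),
    ← sum_filter_swap Aᶜ B (fun x y => H.Adj x y)]
  ring

lemma sum_card_erase (A B : Finset V) :
    ∑ x ∈ A, (B.erase x).card = ∑ y ∈ B, (A.erase y).card := by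
  have h : ∀ (s : Finset V) (a : V), s.erase a = s.filter (fun y => ¬ y = a) := by
    intro s a; ext y; simp [Finset.mem_erase, and_comm]
  simp only [h, Finset.card_filter]
  rw [Finset.sum_comm]
  refine Finset.sum_congr rfl fun y _ => Finset.sum_congr rfl fun x _ => ?_
  by_cases hxy : x = y
  · subst hxy; simp
  · simp [hxy, Ne.symm hxy]

end Aux11

/-- let `G` have a directed 3-cycle `(u,v),(v,w),(w,u)` with
no reverse arcs, suppose every vertex outside `C = {u,v,w}` lies in one of the
classes `C⁰, C⁻, C⁺, C^±`, and suppose the arcs outside `C` satisfy the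
`M`-partition constraints: every ordered pair from `C^± ∪ C⁻` to `C^± ∪ C⁺`
(distinct endpoints) is an arc, and no ordered pair from `C⁺ ∪ C⁰` to
`C⁻ ∪ C⁰` is an arc (the remaining pairs are unrestricted).  Then every
realization of the degree sequence of `G` induces a directed 3-cycle on `C`. -/
theorem statement11 {V : Type} [Fintype V] [DecidableEq V] (G : SDigraph V)
    (u v w : V) (huv : u ≠ v) (hvw : v ≠ w) (huw : u ≠ w)
    (hc : G.Adj u v = true ∧ G.Adj v w = true ∧ G.Adj w u = true ∧
      G.Adj v u = false ∧ G.Adj w v = false ∧ G.Adj u w = false)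
    (hclass : ∀ x : V, x ≠ u → x ≠ v → x ≠ w →
      InC0 G u v w x ∨ InCminus G u v w x ∨ InCplus G u v w x ∨ InCpm G u v w x)
    (hM1 : ∀ x y : V, x ≠ u → x ≠ v → x ≠ w → y ≠ u → y ≠ v → y ≠ w → x ≠ y →
      (InCpm G u v w x ∨ InCminus G u v w x) →
      (InCpm G u v w y ∨ InCplus G u v w y) → G.Adj x y = true)
    (hM0 : ∀ x y : V, x ≠ u → x ≠ v → x ≠ w → y ≠ u → y ≠ v → y ≠ w → x ≠ y →
      (InCplus G u v w x ∨ InC0 G u v w x) →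
      (InCminus G u v w y ∨ InC0 G u v w y) → G.Adj x y = false)
    (G' : SDigraph V)
    (hG' : Realizes G' (fun z => (G.outDeg z, G.inDeg z))) :
    InducesC3 G' u v w := by
  classical
  obtain ⟨cuv, cvw, cwu, cvu, cwv, cuw⟩ := hc
  set A : Finset V := Finset.univ.filter
      (fun x => x = u ∨ x = v ∨ x = w ∨ G.Adj x u = true) with hAdef
  set B : Finset V := Finset.univ.filter
      (fun x => x = u ∨ x = v ∨ x = w ∨ G.Adj u x = true) with hBdef
  have memA : ∀ x : V, x ∈ A ↔ (x = u ∨ x = v ∨ x = w ∨ G.Adj x u = true) := by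
    intro x; rw [hAdef]; simp
  have memB : ∀ x : V, x ∈ B ↔ (x = u ∨ x = v ∨ x = w ∨ G.Adj u x = true) := by
    intro x; rw [hBdef]; simp
  have uA : u ∈ A := (memA u).2 (Or.inl rfl)
  have vA : v ∈ A := (memA v).2 (Or.inr (Or.inl rfl))
  have wA : w ∈ A := (memA w).2 (Or.inr (Or.inr (Or.inl rfl)))
  have uB : u ∈ B := (memB u).2 (Or.inl rfl)
  have vB : v ∈ B := (memB v).2 (Or.inr (Or.inl rfl))
  have wB : w ∈ B := (memB w).2 (Or.inr (Or.inr (Or.inl rfl)))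
  have hAclass : ∀ x, x ≠ u → x ≠ v → x ≠ w → x ∈ A →
      InCpm G u v w x ∨ InCminus G u v w x := by
    intro x h1 h2 h3 hx
    have h4 : G.Adj x u = true := by
      rcases (memA x).1 hx with e|e|e|e
      · exact absurd e h1
      · exact absurd e h2
      · exact absurd e h3
      · exact e
    rcases hclass x h1 h2 h3 with h|h|h|h
    · exact absurd h4 (by simp [h.1])
    · exact Or.inr h
    · exact absurd h4 (by simp [h.1])
    · exact Or.inl h
  have hBclass : ∀ x, x ≠ u → x ≠ v → x ≠ w → x ∈ B →
      InCpm G u v w x ∨ InCplus G u v w x := by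
    intro x h1 h2 h3 hx
    have h4 : G.Adj u x = true := by
      rcases (memB x).1 hx with e|e|e|e
      · exact absurd e h1
      · exact absurd e h2
      · exact absurd e h3
      · exact e
    rcases hclass x h1 h2 h3 with h|h|h|h
    · exact absurd h4 (by simp [h.2.2.2.1])
    · exact absurd h4 (by simp [h.2.2.2.1])
    · exact Or.inr h
    · exact Or.inl h
  have hAnot : ∀ x, x ∉ A → (x ≠ u ∧ x ≠ v ∧ x ≠ w) ∧
      (InCplus G u v w x ∨ InC0 G u v w x) := by
    intro x hx
    have h1 : x ≠ u := fun e => hx ((memA x).2 (Or.inl e))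
    have h2 : x ≠ v := fun e => hx ((memA x).2 (Or.inr (Or.inl e)))
    have h3 : x ≠ w := fun e => hx ((memA x).2 (Or.inr (Or.inr (Or.inl e))))
    have h4 : ¬ G.Adj x u = true := fun e => hx ((memA x).2 (Or.inr (Or.inr (Or.inr e))))
    refine ⟨⟨h1, h2, h3⟩, ?_⟩
    rcases hclass x h1 h2 h3 with h|h|h|h
    · exact Or.inr h
    · exact absurd h.1 h4
    · exact Or.inl h
    · exact absurd h.1 h4
  have hBnot : ∀ x, x ∉ B → (x ≠ u ∧ x ≠ v ∧ x ≠ w) ∧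
      (InCminus G u v w x ∨ InC0 G u v w x) := by
    intro x hx
    have h1 : x ≠ u := fun e => hx ((memB x).2 (Or.inl e))
    have h2 : x ≠ v := fun e => hx ((memB x).2 (Or.inr (Or.inl e)))
    have h3 : x ≠ w := fun e => hx ((memB x).2 (Or.inr (Or.inr (Or.inl e))))
    have h4 : ¬ G.Adj u x = true := fun e => hx ((memB x).2 (Or.inr (Or.inr (Or.inr e))))
    refine ⟨⟨h1, h2, h3⟩, ?_⟩
    rcases hclass x h1 h2 h3 with h|h|h|h
    · exact Or.inr h
    · exact Or.inl h
    · exact absurd h.2.2.2.1 h4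
    · exact absurd h.2.2.2.1 h4
  have L1 : ∀ x, x ∈ A → ∀ y, y ∈ B → x ≠ y →
      ¬(x = v ∧ y = u) → ¬(x = w ∧ y = v) → ¬(x = u ∧ y = w) →
      G.Adj x y = true := by
    intro x hx y hy hxy e1 e2 e3
    by_cases hyu : y = u
    · subst hyu
      by_cases hxv : x = v
      · exact absurd ⟨hxv, rfl⟩ e1
      by_cases hxw : x = w
      · subst hxw; exact cwu
      rcases hAclass x hxy hxv hxw hx with h|h
      · exact h.1
      · exact h.1
    by_cases hyv : y = v
    · subst hyv
      by_cases hxu : x = u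
      · subst hxu; exact cuv
      by_cases hxw : x = w
      · exact absurd ⟨hxw, rfl⟩ e2
      rcases hAclass x hxu hxy hxw hx with h|h
      · exact h.2.1
      · exact h.2.1
    by_cases hyw : y = w
    · subst hyw
      by_cases hxu : x = u
      · exact absurd ⟨hxu, rfl⟩ e3
      by_cases hxv : x = v
      · subst hxv; exact cvw
      rcases hAclass x hxu hxv hxy hx with h|h
      · exact h.2.2.1
      · exact h.2.2.1
    by_cases hxu : x = u
    · subst hxu
      rcases hBclass y hyu hyv hyw hy with h|h
      · exact h.2.2.2.1
      · exact h.2.2.2.1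
    by_cases hxv : x = v
    · subst hxv
      rcases hBclass y hyu hyv hyw hy with h|h
      · exact h.2.2.2.2.1
      · exact h.2.2.2.2.1
    by_cases hxw : x = w
    · subst hxw
      rcases hBclass y hyu hyv hyw hy with h|h
      · exact h.2.2.2.2.2
      · exact h.2.2.2.2.2
    exact hM1 x y hxu hxv hxw hyu hyv hyw hxy (hAclass x hxu hxv hxw hx)
      (hBclass y hyu hyv hyw hy)
  have L2 : ∀ x, x ∉ A → ∀ y, y ∉ B → G.Adj x y = false := by
    intro x hx y hy
    obtain ⟨⟨hx1, hx2, hx3⟩, hxc⟩ := hAnot x hx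
    obtain ⟨⟨hy1, hy2, hy3⟩, hyc⟩ := hBnot y hy
    by_cases hxy : x = y
    · subst hxy; exact G.irrefl x
    · exact hM0 x y hx1 hx2 hx3 hy1 hy2 hy3 hxy hxc hyc
  -- neighborhood identities in G
  have outU : Finset.univ.filter (fun y => G.Adj u y = true) = (B.erase u).erase w := by
    ext y
    simp only [Finset.mem_filter, Finset.mem_univ, true_and, Finset.mem_erase]
    constructor
    · intro h
      refine ⟨?_, ?_, (memB y).2 (Or.inr (Or.inr (Or.inr h)))⟩
      · rintro rfl; exact Bool.noConfusion (h.symm.trans cuw)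
      · rintro rfl; exact Bool.noConfusion (h.symm.trans (G.irrefl _))
    · rintro ⟨hyw, hyu, hyB⟩
      exact L1 u uA y hyB (Ne.symm hyu) (fun e => huv e.1) (fun e => huw e.1)
        (fun e => hyw e.2)
  have outV : Finset.univ.filter (fun y => G.Adj v y = true) = (B.erase v).erase u := by
    ext y
    simp only [Finset.mem_filter, Finset.mem_univ, true_and, Finset.mem_erase]
    constructor
    · intro h
      have hyu : y ≠ u := by rintro rfl; exact Bool.noConfusion (h.symm.trans cvu)
      have hyv : y ≠ v := by rintro rfl; exact Bool.noConfusion (h.symm.trans (G.irrefl _))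
      refine ⟨hyu, hyv, ?_⟩
      by_cases hyw : y = w
      · subst hyw; exact wB
      rcases hclass y hyu hyv hyw with hcl|hcl|hcl|hcl
      · exact absurd h (by simp [hcl.2.2.2.2.1])
      · exact absurd h (by simp [hcl.2.2.2.2.1])
      · exact (memB y).2 (Or.inr (Or.inr (Or.inr hcl.2.2.2.1)))
      · exact (memB y).2 (Or.inr (Or.inr (Or.inr hcl.2.2.2.1)))
    · rintro ⟨hyu, hyv, hyB⟩
      exact L1 v vA y hyB (Ne.symm hyv) (fun e => hyu e.2) (fun e => hvw e.1)
        (fun e => huv e.1.symm)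
  have outW : Finset.univ.filter (fun y => G.Adj w y = true) = (B.erase w).erase v := by
    ext y
    simp only [Finset.mem_filter, Finset.mem_univ, true_and, Finset.mem_erase]
    constructor
    · intro h
      have hyv : y ≠ v := by rintro rfl; exact Bool.noConfusion (h.symm.trans cwv)
      have hyw : y ≠ w := by rintro rfl; exact Bool.noConfusion (h.symm.trans (G.irrefl _))
      refine ⟨hyv, hyw, ?_⟩
      by_cases hyu : y = u
      · subst hyu; exact uB
      rcases hclass y hyu hyv hyw with hcl|hcl|hcl|hcl
      · exact absurd h (by simp [hcl.2.2.2.2.2])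
      · exact absurd h (by simp [hcl.2.2.2.2.2])
      · exact (memB y).2 (Or.inr (Or.inr (Or.inr hcl.2.2.2.1)))
      · exact (memB y).2 (Or.inr (Or.inr (Or.inr hcl.2.2.2.1)))
    · rintro ⟨hyv, hyw, hyB⟩
      exact L1 w wA y hyB (Ne.symm hyw) (fun e => hvw e.1.symm) (fun e => hyv e.2)
        (fun e => huw e.1.symm)
  have inU : Finset.univ.filter (fun x => G.Adj x u = true) = (A.erase u).erase v := by
    ext x
    simp only [Finset.mem_filter, Finset.mem_univ, true_and, Finset.mem_erase]
    constructor
    · intro h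
      refine ⟨?_, ?_, (memA x).2 (Or.inr (Or.inr (Or.inr h)))⟩
      · rintro rfl; exact Bool.noConfusion (h.symm.trans cvu)
      · rintro rfl; exact Bool.noConfusion (h.symm.trans (G.irrefl _))
    · rintro ⟨hxv, hxu, hxA⟩
      exact L1 x hxA u uB hxu (fun e => hxv e.1) (fun e => huv e.2) (fun e => huw e.2)
  have inV : Finset.univ.filter (fun x => G.Adj x v = true) = (A.erase v).erase w := by
    ext x
    simp only [Finset.mem_filter, Finset.mem_univ, true_and, Finset.mem_erase]
    constructor
    · intro h
      have hxw : x ≠ w := by rintro rfl; exact Bool.noConfusion (h.symm.trans cwv)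
      have hxv : x ≠ v := by rintro rfl; exact Bool.noConfusion (h.symm.trans (G.irrefl _))
      refine ⟨hxw, hxv, ?_⟩
      by_cases hxu : x = u
      · subst hxu; exact uA
      rcases hclass x hxu hxv hxw with hcl|hcl|hcl|hcl
      · exact absurd h (by simp [hcl.2.1])
      · exact (memA x).2 (Or.inr (Or.inr (Or.inr hcl.1)))
      · exact absurd h (by simp [hcl.2.1])
      · exact (memA x).2 (Or.inr (Or.inr (Or.inr hcl.1)))
    · rintro ⟨hxw, hxv, hxA⟩
      exact L1 x hxA v vB hxv (fun e => huv e.2.symm) (fun e => hxw e.1) (fun e => hvw e.2)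
  have inW : Finset.univ.filter (fun x => G.Adj x w = true) = (A.erase w).erase u := by
    ext x
    simp only [Finset.mem_filter, Finset.mem_univ, true_and, Finset.mem_erase]
    constructor
    · intro h
      have hxu : x ≠ u := by rintro rfl; exact Bool.noConfusion (h.symm.trans cuw)
      have hxw : x ≠ w := by rintro rfl; exact Bool.noConfusion (h.symm.trans (G.irrefl _))
      refine ⟨hxu, hxw, ?_⟩
      by_cases hxv : x = v
      · subst hxv; exact vA
      rcases hclass x hxu hxv hxw with hcl|hcl|hcl|hcl
      · exact absurd h (by simp [hcl.2.2.1])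
      · exact (memA x).2 (Or.inr (Or.inr (Or.inr hcl.1)))
      · exact absurd h (by simp [hcl.2.2.1])
      · exact (memA x).2 (Or.inr (Or.inr (Or.inr hcl.1)))
    · rintro ⟨hxu, hxw, hxA⟩
      exact L1 x hxA w wB hxw (fun e => huw e.2.symm) (fun e => hvw e.2.symm)
        (fun e => hxu e.1)
  -- degree values
  have wBu : w ∈ B.erase u := Finset.mem_erase.2 ⟨Ne.symm huw, wB⟩
  have uBv : u ∈ B.erase v := Finset.mem_erase.2 ⟨huv, uB⟩
  have vBw : v ∈ B.erase w := Finset.mem_erase.2 ⟨hvw, vB⟩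
  have vAu : v ∈ A.erase u := Finset.mem_erase.2 ⟨Ne.symm huv, vA⟩
  have wAv : w ∈ A.erase v := Finset.mem_erase.2 ⟨Ne.symm hvw, wA⟩
  have uAw : u ∈ A.erase w := Finset.mem_erase.2 ⟨huw, uA⟩
  have degOutU : G.outDeg u + 1 = (B.erase u).card := by
    have h1 := Finset.card_erase_of_mem wBu
    have h2 : 0 < (B.erase u).card := Finset.card_pos.2 ⟨w, wBu⟩
    rw [SDigraph.outDeg, outU]
    omega
  have degOutV : G.outDeg v + 1 = (B.erase v).card := by
    have h1 := Finset.card_erase_of_mem uBv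
    have h2 : 0 < (B.erase v).card := Finset.card_pos.2 ⟨u, uBv⟩
    rw [SDigraph.outDeg, outV]
    omega
  have degOutW : G.outDeg w + 1 = (B.erase w).card := by
    have h1 := Finset.card_erase_of_mem vBw
    have h2 : 0 < (B.erase w).card := Finset.card_pos.2 ⟨v, vBw⟩
    rw [SDigraph.outDeg, outW]
    omega
  have degInU : G.inDeg u + 1 = (A.erase u).card := by
    have h1 := Finset.card_erase_of_mem vAu
    have h2 : 0 < (A.erase u).card := Finset.card_pos.2 ⟨v, vAu⟩
    rw [SDigraph.inDeg, inU]
    omega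
  have degInV : G.inDeg v + 1 = (A.erase v).card := by
    have h1 := Finset.card_erase_of_mem wAv
    have h2 : 0 < (A.erase v).card := Finset.card_pos.2 ⟨w, wAv⟩
    rw [SDigraph.inDeg, inV]
    omega
  have degInW : G.inDeg w + 1 = (A.erase w).card := by
    have h1 := Finset.card_erase_of_mem uAw
    have h2 : 0 < (A.erase w).card := Finset.card_pos.2 ⟨u, uAw⟩
    rw [SDigraph.inDeg, inW]
    omega
  -- per-vertex true/false splits
  have eqout : ∀ (H : SDigraph V) (x : V),
      (B.filter (fun y => H.Adj x y = true)).card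
        + ((B.erase x).filter (fun y => H.Adj x y = false)).card = (B.erase x).card := by
    intro H x
    have h : B.filter (fun y => H.Adj x y = true)
        = (B.erase x).filter (fun y => H.Adj x y = true) := by
      ext y
      simp only [Finset.mem_filter, Finset.mem_erase]
      constructor
      · rintro ⟨h1, h2⟩
        refine ⟨⟨?_, h1⟩, h2⟩
        rintro rfl; exact Bool.noConfusion (h2.symm.trans (H.irrefl y))
      · rintro ⟨⟨_, h1⟩, h2⟩; exact ⟨h1, h2⟩
    rw [h]
    exact filter_true_add_false (B.erase x) (fun y => H.Adj x y)
  have eqin : ∀ (H : SDigraph V) (y : V),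
      (A.filter (fun x => H.Adj x y = true)).card
        + ((A.erase y).filter (fun x => H.Adj x y = false)).card = (A.erase y).card := by
    intro H y
    have h : A.filter (fun x => H.Adj x y = true)
        = (A.erase y).filter (fun x => H.Adj x y = true) := by
      ext x
      simp only [Finset.mem_filter, Finset.mem_erase]
      constructor
      · rintro ⟨h1, h2⟩
        refine ⟨⟨?_, h1⟩, h2⟩
        rintro rfl; exact Bool.noConfusion (h2.symm.trans (H.irrefl x))
      · rintro ⟨⟨_, h1⟩, h2⟩; exact ⟨h1, h2⟩
    rw [h]
    exact filter_true_add_false (A.erase y) (fun x => H.Adj x y)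
  have sumN : ∀ H : SDigraph V,
      (∑ x ∈ A, (B.filter (fun y => H.Adj x y = true)).card)
      + (∑ x ∈ A, ((B.erase x).filter (fun y => H.Adj x y = false)).card)
      = ∑ x ∈ A, (B.erase x).card := by
    intro H
    rw [← Finset.sum_add_distrib]
    exact Finset.sum_congr rfl fun x _ => eqout H x
  have sumNin : ∀ H : SDigraph V,
      (∑ y ∈ B, (A.filter (fun x => H.Adj x y = true)).card)
      + (∑ y ∈ B, ((A.erase y).filter (fun x => H.Adj x y = false)).card)
      = ∑ y ∈ B, (A.erase y).card := by
    intro H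
    rw [← Finset.sum_add_distrib]
    exact Finset.sum_congr rfl fun y _ => eqin H y
  have idG := count_identity G A B
  have idG' := count_identity G' A B
  have hZ0 : (∑ x ∈ Aᶜ, ((Bᶜ).filter (fun y => G.Adj x y = true)).card) = 0 := by
    apply Finset.sum_eq_zero
    intro x hx
    rw [Finset.card_eq_zero, Finset.filter_eq_empty_iff]
    intro y hy
    have h := L2 x (Finset.mem_compl.1 hx) y (Finset.mem_compl.1 hy)
    simp [h]
  have hins : ∑ y ∈ B, G'.inDeg y = ∑ y ∈ B, G.inDeg y :=
    Finset.sum_congr rfl fun y _ => by simpa using (hG' y).2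
  have houts : ∑ x ∈ Aᶜ, G'.outDeg x = ∑ x ∈ Aᶜ, G.outDeg x :=
    Finset.sum_congr rfl fun x _ => by simpa using (hG' x).1
  rw [hins, houts] at idG'
  -- deficiency of G equals 3
  have hCsubA : ({u, v, w} : Finset V) ⊆ A := by
    intro x hx
    simp only [Finset.mem_insert, Finset.mem_singleton] at hx
    rcases hx with rfl|rfl|rfl
    · exact uA
    · exact vA
    · exact wA
  have hCsubB : ({u, v, w} : Finset V) ⊆ B := by
    intro x hx
    simp only [Finset.mem_insert, Finset.mem_singleton] at hx
    rcases hx with rfl|rfl|rfl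
    · exact uB
    · exact vB
    · exact wB
  have hnm1 : u ∉ ({v, w} : Finset V) := by simp [huv, huw]
  have hnm2 : v ∉ ({w} : Finset V) := by simp [hvw]
  have sum3 : ∀ f : V → ℕ, ∑ x ∈ ({u, v, w} : Finset V), f x = f u + f v + f w := by
    intro f
    rw [Finset.sum_insert hnm1, Finset.sum_insert hnm2, Finset.sum_singleton]
    omega
  have splitA : ∀ f : V → ℕ, ∑ x ∈ A, f x
      = (∑ x ∈ A \ ({u, v, w} : Finset V), f x) + (f u + f v + f w) := by
    intro f
    rw [← Finset.sum_sdiff hCsubA, sum3]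
  have splitB : ∀ f : V → ℕ, ∑ x ∈ B, f x
      = (∑ x ∈ B \ ({u, v, w} : Finset V), f x) + (f u + f v + f w) := by
    intro f
    rw [← Finset.sum_sdiff hCsubB, sum3]
  have fGu : (B.erase u).filter (fun y => G.Adj u y = false) = {w} := by
    ext y
    simp only [Finset.mem_filter, Finset.mem_erase, Finset.mem_singleton]
    constructor
    · rintro ⟨⟨hyu, hyB⟩, hf⟩
      by_contra hyw
      have h := L1 u uA y hyB (Ne.symm hyu) (fun e => huv e.1) (fun e => huw e.1)
        (fun e => hyw e.2)
      exact Bool.noConfusion (h.symm.trans hf)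
    · rintro rfl
      exact ⟨⟨Ne.symm huw, wB⟩, cuw⟩
  have fGv : (B.erase v).filter (fun y => G.Adj v y = false) = {u} := by
    ext y
    simp only [Finset.mem_filter, Finset.mem_erase, Finset.mem_singleton]
    constructor
    · rintro ⟨⟨hyv, hyB⟩, hf⟩
      by_contra hyu
      have h := L1 v vA y hyB (Ne.symm hyv) (fun e => hyu e.2) (fun e => hvw e.1)
        (fun e => huv e.1.symm)
      exact Bool.noConfusion (h.symm.trans hf)
    · rintro rfl
      exact ⟨⟨huv, uB⟩, cvu⟩
  have fGw : (B.erase w).filter (fun y => G.Adj w y = false) = {v} := by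
    ext y
    simp only [Finset.mem_filter, Finset.mem_erase, Finset.mem_singleton]
    constructor
    · rintro ⟨⟨hyw, hyB⟩, hf⟩
      by_contra hyv
      have h := L1 w wA y hyB (Ne.symm hyw) (fun e => hvw e.1.symm) (fun e => hyv e.2)
        (fun e => huw e.1.symm)
      exact Bool.noConfusion (h.symm.trans hf)
    · rintro rfl
      exact ⟨⟨hvw, vB⟩, cwv⟩
  have hDG : ∑ x ∈ A, ((B.erase x).filter (fun y => G.Adj x y = false)).card = 3 := by
    have hsplit : (∑ x ∈ A, ((B.erase x).filter (fun y => G.Adj x y = false)).card)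
        = (∑ x ∈ A \ ({u, v, w} : Finset V),
            ((B.erase x).filter (fun y => G.Adj x y = false)).card)
          + (((B.erase u).filter (fun y => G.Adj u y = false)).card
            + ((B.erase v).filter (fun y => G.Adj v y = false)).card
            + ((B.erase w).filter (fun y => G.Adj w y = false)).card) := splitA _
    have h0 : ∑ x ∈ A \ ({u, v, w} : Finset V),
        ((B.erase x).filter (fun y => G.Adj x y = false)).card = 0 := by
      apply Finset.sum_eq_zero
      intro x hx
      rw [Finset.mem_sdiff] at hx
      simp only [Finset.mem_insert, Finset.mem_singleton, not_or] at hx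
      rw [Finset.card_eq_zero, Finset.filter_eq_empty_iff]
      intro y hy
      rw [Finset.mem_erase] at hy
      have h := L1 x hx.1 y hy.2 (Ne.symm hy.1) (fun e => hx.2.2.1 e.1)
        (fun e => hx.2.2.2 e.1) (fun e => hx.2.1 e.1)
      simp [h]
    rw [hsplit, h0, fGu, fGv, fGw]
    simp
  have key : (∑ x ∈ A, ((B.erase x).filter (fun y => G'.Adj x y = false)).card)
      + (∑ x ∈ Aᶜ, ((Bᶜ).filter (fun y => G'.Adj x y = true)).card) = 3 := by
    have h1 := sumN G
    have h2 := sumN G'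
    omega
  -- lower bounds for out-deficiencies at u, v, w
  have boundU : 1 ≤ ((B.erase u).filter (fun y => G'.Adj u y = false)).card := by
    have h1 := eqout G' u
    have h2 : (B.filter (fun y => G'.Adj u y = true)).card ≤ G'.outDeg u := by
      rw [SDigraph.outDeg]
      exact Finset.card_le_card (Finset.filter_subset_filter _ (Finset.subset_univ B))
    have h3 : G'.outDeg u = G.outDeg u := by simpa using (hG' u).1
    omega
  have boundV : 1 ≤ ((B.erase v).filter (fun y => G'.Adj v y = false)).card := by
    have h1 := eqout G' v
    have h2 : (B.filter (fun y => G'.Adj v y = true)).card ≤ G'.outDeg v := by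
      rw [SDigraph.outDeg]
      exact Finset.card_le_card (Finset.filter_subset_filter _ (Finset.subset_univ B))
    have h3 : G'.outDeg v = G.outDeg v := by simpa using (hG' v).1
    omega
  have boundW : 1 ≤ ((B.erase w).filter (fun y => G'.Adj w y = false)).card := by
    have h1 := eqout G' w
    have h2 : (B.filter (fun y => G'.Adj w y = true)).card ≤ G'.outDeg w := by
      rw [SDigraph.outDeg]
      exact Finset.card_le_card (Finset.filter_subset_filter _ (Finset.subset_univ B))
    have h3 : G'.outDeg w = G.outDeg w := by simpa using (hG' w).1
    omega
  have hD3 : (∑ x ∈ A, ((B.erase x).filter (fun y => G'.Adj x y = false)).card)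
      = (∑ x ∈ A \ ({u, v, w} : Finset V),
          ((B.erase x).filter (fun y => G'.Adj x y = false)).card)
        + (((B.erase u).filter (fun y => G'.Adj u y = false)).card
          + ((B.erase v).filter (fun y => G'.Adj v y = false)).card
          + ((B.erase w).filter (fun y => G'.Adj w y = false)).card) := splitA _
  have hfu : ((B.erase u).filter (fun y => G'.Adj u y = false)).card = 1 := by omega
  have hfv : ((B.erase v).filter (fun y => G'.Adj v y = false)).card = 1 := by omega
  have hfw : ((B.erase w).filter (fun y => G'.Adj w y = false)).card = 1 := by omega
  have hDG' : (∑ x ∈ A, ((B.erase x).filter (fun y => G'.Adj x y = false)).card) = 3 := by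
    omega
  -- in-side deficiencies sum to 3 as well
  have hDin : ∑ y ∈ B, ((A.erase y).filter (fun x => G'.Adj x y = false)).card = 3 := by
    have h2 := sumN G'
    have h3 := sumNin G'
    have h4 : (∑ x ∈ A, (B.filter (fun y => G'.Adj x y = true)).card)
        = ∑ y ∈ B, (A.filter (fun x => G'.Adj x y = true)).card :=
      sum_filter_swap A B (fun x y => G'.Adj x y)
    have h5 := sum_card_erase A B
    omega
  have boundInU : 1 ≤ ((A.erase u).filter (fun x => G'.Adj x u = false)).card := by
    have h1 := eqin G' u
    have h2 : (A.filter (fun x => G'.Adj x u = true)).card ≤ G'.inDeg u := by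
      rw [SDigraph.inDeg]
      exact Finset.card_le_card (Finset.filter_subset_filter _ (Finset.subset_univ A))
    have h3 : G'.inDeg u = G.inDeg u := by simpa using (hG' u).2
    omega
  have boundInV : 1 ≤ ((A.erase v).filter (fun x => G'.Adj x v = false)).card := by
    have h1 := eqin G' v
    have h2 : (A.filter (fun x => G'.Adj x v = true)).card ≤ G'.inDeg v := by
      rw [SDigraph.inDeg]
      exact Finset.card_le_card (Finset.filter_subset_filter _ (Finset.subset_univ A))
    have h3 : G'.inDeg v = G.inDeg v := by simpa using (hG' v).2
    omega
  have boundInW : 1 ≤ ((A.erase w).filter (fun x => G'.Adj x w = false)).card := by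
    have h1 := eqin G' w
    have h2 : (A.filter (fun x => G'.Adj x w = true)).card ≤ G'.inDeg w := by
      rw [SDigraph.inDeg]
      exact Finset.card_le_card (Finset.filter_subset_filter _ (Finset.subset_univ A))
    have h3 : G'.inDeg w = G.inDeg w := by simpa using (hG' w).2
    omega
  have hIn3 : (∑ y ∈ B, ((A.erase y).filter (fun x => G'.Adj x y = false)).card)
      = (∑ y ∈ B \ ({u, v, w} : Finset V),
          ((A.erase y).filter (fun x => G'.Adj x y = false)).card)
        + (((A.erase u).filter (fun x => G'.Adj x u = false)).card
          + ((A.erase v).filter (fun x => G'.Adj x v = false)).card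
          + ((A.erase w).filter (fun x => G'.Adj x w = false)).card) := splitB _
  have hgu : ((A.erase u).filter (fun x => G'.Adj x u = false)).card = 1 := by omega
  have hgv : ((A.erase v).filter (fun x => G'.Adj x v = false)).card = 1 := by omega
  have hgw : ((A.erase w).filter (fun x => G'.Adj x w = false)).card = 1 := by omega
  have hgrest : ∑ y ∈ B \ ({u, v, w} : Finset V),
      ((A.erase y).filter (fun x => G'.Adj x y = false)).card = 0 := by omega
  have gzero : ∀ y, y ∈ B → y ≠ u → y ≠ v → y ≠ w → ∀ x, x ∈ A → x ≠ y →
      G'.Adj x y = true := by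
    intro y hyB hy1 hy2 hy3 x hxA hxy
    have hyBs : y ∈ B \ ({u, v, w} : Finset V) :=
      Finset.mem_sdiff.2 ⟨hyB, by simp [hy1, hy2, hy3]⟩
    have h0 : ((A.erase y).filter (fun x => G'.Adj x y = false)).card = 0 :=
      (Finset.sum_eq_zero_iff.1 hgrest) y hyBs
    rw [Finset.card_eq_zero, Finset.filter_eq_empty_iff] at h0
    have hx : x ∈ A.erase y := Finset.mem_erase.2 ⟨hxy, hxA⟩
    have hne := h0 hx
    cases hb : G'.Adj x y
    · exact absurd hb hne
    · rfl
  -- extract the unique missing arcs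
  obtain ⟨yu, hyusing⟩ := Finset.card_eq_one.1 hfu
  have hyuB : yu ∈ B ∧ yu ≠ u ∧ G'.Adj u yu = false := by
    have h : yu ∈ (B.erase u).filter (fun y => G'.Adj u y = false) := by
      rw [hyusing]; exact Finset.mem_singleton_self yu
    rw [Finset.mem_filter, Finset.mem_erase] at h
    exact ⟨h.1.2, h.1.1, h.2⟩
  have huniqU : ∀ z, z ∈ B → z ≠ u → G'.Adj u z = false → z = yu := by
    intro z h1 h2 h3
    have h : z ∈ (B.erase u).filter (fun y => G'.Adj u y = false) :=
      Finset.mem_filter.2 ⟨Finset.mem_erase.2 ⟨h2, h1⟩, h3⟩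
    rw [hyusing, Finset.mem_singleton] at h
    exact h
  obtain ⟨yv, hyvsing⟩ := Finset.card_eq_one.1 hfv
  have hyvB : yv ∈ B ∧ yv ≠ v ∧ G'.Adj v yv = false := by
    have h : yv ∈ (B.erase v).filter (fun y => G'.Adj v y = false) := by
      rw [hyvsing]; exact Finset.mem_singleton_self yv
    rw [Finset.mem_filter, Finset.mem_erase] at h
    exact ⟨h.1.2, h.1.1, h.2⟩
  obtain ⟨yw, hywsing⟩ := Finset.card_eq_one.1 hfw
  have hywB : yw ∈ B ∧ yw ≠ w ∧ G'.Adj w yw = false := by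
    have h : yw ∈ (B.erase w).filter (fun y => G'.Adj w y = false) := by
      rw [hywsing]; exact Finset.mem_singleton_self yw
    rw [Finset.mem_filter, Finset.mem_erase] at h
    exact ⟨h.1.2, h.1.1, h.2⟩
  obtain ⟨xu, hxusing⟩ := Finset.card_eq_one.1 hgu
  have huniqInU : ∀ z, z ∈ A → z ≠ u → G'.Adj z u = false → z = xu := by
    intro z h1 h2 h3
    have h : z ∈ (A.erase u).filter (fun x => G'.Adj x u = false) :=
      Finset.mem_filter.2 ⟨Finset.mem_erase.2 ⟨h2, h1⟩, h3⟩
    rw [hxusing, Finset.mem_singleton] at h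
    exact h
  obtain ⟨xv, hxvsing⟩ := Finset.card_eq_one.1 hgv
  have huniqInV : ∀ z, z ∈ A → z ≠ v → G'.Adj z v = false → z = xv := by
    intro z h1 h2 h3
    have h : z ∈ (A.erase v).filter (fun x => G'.Adj x v = false) :=
      Finset.mem_filter.2 ⟨Finset.mem_erase.2 ⟨h2, h1⟩, h3⟩
    rw [hxvsing, Finset.mem_singleton] at h
    exact h
  obtain ⟨xw, hxwsing⟩ := Finset.card_eq_one.1 hgw
  have huniqInW : ∀ z, z ∈ A → z ≠ w → G'.Adj z w = false → z = xw := by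
    intro z h1 h2 h3
    have h : z ∈ (A.erase w).filter (fun x => G'.Adj x w = false) :=
      Finset.mem_filter.2 ⟨Finset.mem_erase.2 ⟨h2, h1⟩, h3⟩
    rw [hxwsing, Finset.mem_singleton] at h
    exact h
  have hyuC : yu = v ∨ yu = w := by
    by_cases h1 : yu = v
    · exact Or.inl h1
    by_cases h2 : yu = w
    · exact Or.inr h2
    exfalso
    have h := gzero yu hyuB.1 hyuB.2.1 h1 h2 u uA (Ne.symm hyuB.2.1)
    exact Bool.noConfusion (h.symm.trans hyuB.2.2)
  have hyvC : yv = u ∨ yv = w := by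
    by_cases h1 : yv = u
    · exact Or.inl h1
    by_cases h2 : yv = w
    · exact Or.inr h2
    exfalso
    have h := gzero yv hyvB.1 h1 hyvB.2.1 h2 v vA (Ne.symm hyvB.2.1)
    exact Bool.noConfusion (h.symm.trans hyvB.2.2)
  have hywC : yw = u ∨ yw = v := by
    by_cases h1 : yw = u
    · exact Or.inl h1
    by_cases h2 : yw = v
    · exact Or.inr h2
    exfalso
    have h := gzero yw hywB.1 h1 h2 hywB.2.1 w wA (Ne.symm hywB.2.1)
    exact Bool.noConfusion (h.symm.trans hywB.2.2)
  rcases hyuC with hcase | hcase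
  · -- yu = v : reversed 3-cycle in G'
    subst hcase
    have st1 : G'.Adj u yu = false := hyuB.2.2
    have st2 : G'.Adj u w = true := by
      cases hb : G'.Adj u w
      · exact absurd (huniqU w wB (Ne.symm huw) hb) (Ne.symm hvw)
      · rfl
    have st3 : G'.Adj w yu = true := by
      have hxveq : xv = u := (huniqInV u uA huv st1).symm
      cases hb : G'.Adj w yu
      · have h := huniqInV w wA (Ne.symm hvw) hb
        rw [hxveq] at h
        exact absurd h (Ne.symm huw)
      · rfl
    have st4 : G'.Adj w u = false := by
      rcases hywC with h | h
      · rw [← h]; exact hywB.2.2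
      · exfalso
        have hh := hywB.2.2
        rw [h] at hh
        exact Bool.noConfusion (st3.symm.trans hh)
    have st5 : G'.Adj yu u = true := by
      have hxueq : xu = w := (huniqInU w wA (Ne.symm huw) st4).symm
      cases hb : G'.Adj yu u
      · have h := huniqInU yu vA (Ne.symm huv) hb
        rw [hxueq] at h
        exact absurd h hvw
      · rfl
    have st6 : G'.Adj yu w = false := by
      rcases hyvC with h | h
      · exfalso
        have hh := hyvB.2.2
        rw [h] at hh
        exact Bool.noConfusion (st5.symm.trans hh)
      · rw [← h]; exact hyvB.2.2
    exact Or.inr ⟨st5, st3, st2, st1, st6, st4⟩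
  · -- yu = w : forward 3-cycle in G'
    subst hcase
    have st1 : G'.Adj u yu = false := hyuB.2.2
    have st2 : G'.Adj u v = true := by
      cases hb : G'.Adj u v
      · exact absurd (huniqU v vB (Ne.symm huv) hb) hvw
      · rfl
    have st3 : G'.Adj v yu = true := by
      have hxweq : xw = u := (huniqInW u uA huw st1).symm
      cases hb : G'.Adj v yu
      · have h := huniqInW v vA hvw hb
        rw [hxweq] at h
        exact absurd h (Ne.symm huv)
      · rfl
    have st4 : G'.Adj v u = false := by
      rcases hyvC with h | h
      · rw [← h]; exact hyvB.2.2
      · exfalso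
        have hh := hyvB.2.2
        rw [h] at hh
        exact Bool.noConfusion (st3.symm.trans hh)
    have st5 : G'.Adj yu u = true := by
      have hxueq : xu = v := (huniqInU v vA (Ne.symm huv) st4).symm
      cases hb : G'.Adj yu u
      · have h := huniqInU yu wA (Ne.symm huw) hb
        rw [hxueq] at h
        exact absurd h (Ne.symm hvw)
      · rfl
    have st6 : G'.Adj yu v = false := by
      rcases hywC with h | h
      · exfalso
        have hh := hywB.2.2
        rw [h] at hh
        exact Bool.noConfusion (st5.symm.trans hh)
      · rw [← h]; exact hywB.2.2
    exact Or.inl ⟨st2, st3, st5, st4, st6, st1⟩
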